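/- Let n be a positive even integer and let X = (X_1, …, X_n) be a random variable taking values in {0,1}^n whose joint distribution is (n/2)-wise independent. Then the Shannon entropy of X satisfies H(X) ≥ n − log₂(n+1). -/
import Mathlib


/-- `p` is the probability mass function of a `k`-wise independent random variable
taking values in `{0,1}^n`: every restriction to at most `k` coordinates is uniform. -/
def KWiseIndep (n k : ℕ) (p : (Fin n → Bool) → ℝ) : Prop :=
  ∀ S : Finset (Fin n), S.card ≤ k → ∀ a : Fin n → Bool,
    (∑ x ∈ Finset.univ.filter fun x => ∀ i ∈ S, x i = a i, p x) = (1 / 2 : ℝ) ^ S.card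

/-- Shannon entropy (base 2) of a pmf on `{0,1}^n`; note `Real.logb 2 0 = 0`,
matching the convention `0 · log₂ 0 = 0`. -/
noncomputable def shannonEntropy {n : ℕ} (p : (Fin n → Bool) → ℝ) : ℝ :=
  -∑ x, p x * Real.logb 2 (p x)

namespace KWIaux

variable {n : ℕ}

/-- The Fourier character attached to a set of coordinates. -/
noncomputable def chi (S : Finset (Fin n)) (x : Fin n → Bool) : ℝ :=
  ∏ i ∈ S, (if x i then (-1 : ℝ) else 1)

/-- Fourier coefficients vanish on nonempty sets of size ≤ k. -/
lemma fourier_vanish {k : ℕ} {p : (Fin n → Bool) → ℝ} (h : KWiseIndep n k p)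
    (S : Finset (Fin n)) (hS : S.Nonempty) (hSk : S.card ≤ k) :
    ∑ x, p x * chi S x = 0 := by
  have expand : ∀ x : Fin n → Bool, chi S x
      = ∑ T ∈ S.powerset, (-2 : ℝ) ^ T.card * (if ∀ i ∈ T, x i = true then 1 else 0) := by
    intro x
    have : chi S x = ∏ i ∈ S, ((if x i = true then (-2:ℝ) else 0) + 1) := by
      unfold chi
      refine Finset.prod_congr rfl fun i _ => ?_
      cases x i <;> norm_num
    rw [this, Finset.prod_add]
    refine Finset.sum_congr rfl fun T hT => ?_
    rw [Finset.prod_const_one, mul_one]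
    have : ∀ i ∈ T, (if x i = true then (-2:ℝ) else 0) = (-2) * (if x i = true then 1 else 0) := by
      intro i _; by_cases h : x i = true <;> simp [h]
    rw [Finset.prod_congr rfl this, Finset.prod_mul_distrib, Finset.prod_const,
      Finset.prod_boole]
    ring
  calc ∑ x, p x * chi S x
      = ∑ x, ∑ T ∈ S.powerset, (-2 : ℝ) ^ T.card * (p x * if ∀ i ∈ T, x i = true then 1 else 0) := by
        refine Finset.sum_congr rfl fun x _ => ?_
        rw [expand x, Finset.mul_sum]
        exact Finset.sum_congr rfl fun T _ => by ring
    _ = ∑ T ∈ S.powerset, (-2 : ℝ) ^ T.card * ∑ x, (p x * if ∀ i ∈ T, x i = true then 1 else 0) := by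
        rw [Finset.sum_comm]
        exact Finset.sum_congr rfl fun T _ => by rw [Finset.mul_sum]
    _ = ∑ T ∈ S.powerset, (-2 : ℝ) ^ T.card * (1/2 : ℝ) ^ T.card := by
        refine Finset.sum_congr rfl fun T hT => ?_
        congr 1
        have : ∑ x : Fin n → Bool, (p x * if ∀ i ∈ T, x i = true then 1 else 0)
            = ∑ x ∈ Finset.univ.filter fun x => ∀ i ∈ T, x i = (fun _ => true) i, p x := by
          rw [Finset.sum_filter]
          exact Finset.sum_congr rfl fun x _ => by by_cases hc : ∀ i ∈ T, x i = true <;> simp [hc]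
        rw [this, h T (le_trans (Finset.card_le_card (Finset.mem_powerset.mp hT)) hSk)]
    _ = ∑ T ∈ S.powerset, (-1 : ℝ) ^ T.card := by
        refine Finset.sum_congr rfl fun T _ => ?_
        rw [← mul_pow]; norm_num
    _ = 0 := by
        have := Finset.sum_powerset_neg_one_pow_card_of_nonempty (x := S) hS
        have h2 : ((∑ m ∈ S.powerset, (-1 : ℤ) ^ m.card : ℤ) : ℝ) = ∑ T ∈ S.powerset, (-1:ℝ) ^ T.card := by
          push_cast; ring_nf
        rw [← h2, this]; norm_num

/-- Sum over all subsets of a product equals the product of (1 + η). -/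
lemma sum_prod_eq (η : Fin n → ℝ) :
    ∑ S : Finset (Fin n), ∏ i ∈ S, η i = ∏ i, (1 + η i) := by
  have h := Finset.prod_add η (fun _ => (1:ℝ)) Finset.univ
  simp only [Finset.prod_const_one, mul_one, Finset.powerset_univ] at h
  rw [← h]
  exact Finset.prod_congr rfl fun i _ => (add_comm _ _)

lemma sum_prod_sign_eq (η : Fin n → ℝ) (i₀ : Fin n) :
    ∑ S : Finset (Fin n), (∏ i ∈ S, η i) * (if i₀ ∈ S then (-1:ℝ) else 1)
      = (1 - η i₀) * ∏ i ∈ Finset.univ.erase i₀, (1 + η i) := by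
  set η' : Fin n → ℝ := fun i => if i = i₀ then -η i₀ else η i with hη'
  have hηi₀ : η' i₀ = -η i₀ := by simp [hη']
  have key : ∀ S : Finset (Fin n),
      (∏ i ∈ S, η i) * (if i₀ ∈ S then (-1:ℝ) else 1) = ∏ i ∈ S, η' i := by
    intro S
    by_cases hmem : i₀ ∈ S
    · rw [if_pos hmem, ← Finset.mul_prod_erase S η' hmem, ← Finset.mul_prod_erase S η hmem]
      have h3 : ∏ i ∈ S.erase i₀, η' i = ∏ i ∈ S.erase i₀, η i :=
        Finset.prod_congr rfl fun i hi => by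
          simp [hη', Finset.ne_of_mem_erase hi]
      rw [h3, hηi₀]; ring
    · rw [if_neg hmem, mul_one]
      refine (Finset.prod_congr rfl fun i hi => ?_).symm
      have hne : i ≠ i₀ := fun h => hmem (h ▸ hi)
      simp [hη', hne]
  rw [Finset.sum_congr rfl fun S _ => key S, sum_prod_eq η']
  rw [← Finset.mul_prod_erase Finset.univ _ (Finset.mem_univ i₀)]
  have h1 : (1 + η' i₀) = 1 - η i₀ := by rw [hηi₀]; ring
  have h2 : ∏ i ∈ Finset.univ.erase i₀, (1 + η' i) = ∏ i ∈ Finset.univ.erase i₀, (1 + η i) :=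
    Finset.prod_congr rfl fun i hi => by simp [hη', Finset.ne_of_mem_erase hi]
  rw [h1, h2]

/-- The weight `n - 2|S|` as a sum of signs. -/
lemma weight_eq (S : Finset (Fin n)) :
    (n : ℝ) - 2 * S.card = ∑ i₀ : Fin n, (if i₀ ∈ S then (-1:ℝ) else 1) := by
  have h1 : ∑ i₀ : Fin n, (if i₀ ∈ S then (-1:ℝ) else 1)
      = ∑ i₀ : Fin n, ((1:ℝ) - 2 * (if i₀ ∈ S then (1:ℝ) else 0)) := by
    refine Finset.sum_congr rfl fun i _ => ?_
    by_cases h : i ∈ S <;> simp [h] <;> norm_num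
  have h2 : ∑ i₀ : Fin n, (if i₀ ∈ S then (1:ℝ) else 0) = S.card := by
    rw [Finset.sum_ite_mem, Finset.univ_inter, Finset.sum_const]; simp
  rw [h1, Finset.sum_sub_distrib, ← Finset.mul_sum, h2]
  simp

noncomputable def eta (x y : Fin n → Bool) (i : Fin n) : ℝ :=
  if x i = y i then 1 else -1

lemma chi_mul (S : Finset (Fin n)) (x y : Fin n → Bool) :
    chi S x * chi S y = ∏ i ∈ S, eta x y i := by
  unfold chi eta
  rw [← Finset.prod_mul_distrib]
  refine Finset.prod_congr rfl fun i _ => ?_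
  cases hx : x i <;> cases hy : y i <;> norm_num

lemma eta_le_one (x y : Fin n → Bool) (i : Fin n) : eta x y i ≤ 1 := by
  unfold eta; split <;> norm_num

lemma neg_one_le_eta (x y : Fin n → Bool) (i : Fin n) : -1 ≤ eta x y i := by
  unfold eta; split <;> norm_num

variable (p : (Fin n → Bool) → ℝ)

/-- The Fourier coefficient of `p` at `S` (times `2^n`). -/
noncomputable def A (S : Finset (Fin n)) : ℝ := ∑ x, p x * chi S x

lemma sum_sq_mul (w : Finset (Fin n) → ℝ) :
    ∑ S : Finset (Fin n), (A p S)^2 * w S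
      = ∑ x, ∑ y, p x * p y * ∑ S : Finset (Fin n), (∏ i ∈ S, eta x y i) * w S := by
  have hA2 : ∀ S, (A p S)^2 * w S
      = ∑ x, ∑ y, p x * p y * ((∏ i ∈ S, eta x y i) * w S) := by
    intro S
    rw [sq, A, Finset.sum_mul_sum, Finset.sum_mul]
    refine Finset.sum_congr rfl fun x _ => ?_
    rw [Finset.sum_mul]
    refine Finset.sum_congr rfl fun y _ => ?_
    rw [← chi_mul]
    ring
  rw [Finset.sum_congr rfl fun S _ => hA2 S, Finset.sum_comm]
  refine Finset.sum_congr rfl fun x _ => ?_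
  rw [Finset.sum_comm]
  refine Finset.sum_congr rfl fun y _ => ?_
  rw [← Finset.mul_sum]

/-- Parseval identity. -/
lemma parseval :
    ∑ S : Finset (Fin n), (A p S)^2 = (2:ℝ)^n * ∑ x, (p x)^2 := by
  have h := sum_sq_mul p (fun _ => (1:ℝ))
  simp only [mul_one] at h
  rw [h]
  have inner : ∀ x y : Fin n → Bool,
      ∑ S : Finset (Fin n), ∏ i ∈ S, eta x y i = if x = y then (2:ℝ)^n else 0 := by
    intro x y
    rw [sum_prod_eq]
    by_cases hxy : x = y
    · subst hxy
      rw [if_pos rfl]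
      have : ∀ i ∈ Finset.univ, (1 : ℝ) + eta x x i = 2 := by
        intro i _; norm_num [eta]
      rw [Finset.prod_congr rfl this, Finset.prod_const]
      simp
    · rw [if_neg hxy]
      obtain ⟨j, hj⟩ := Function.ne_iff.mp hxy
      refine Finset.prod_eq_zero (Finset.mem_univ j) ?_
      unfold eta
      rw [if_neg hj]
      ring
  rw [Finset.mul_sum]
  refine Finset.sum_congr rfl fun x _ => ?_
  rw [Finset.sum_congr rfl fun y _ => by rw [inner x y]]
  rw [Finset.sum_eq_single_of_mem x (Finset.mem_univ x) (fun y _ hyx => by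
    rw [if_neg (Ne.symm hyx), mul_zero])]
  rw [if_pos rfl]; ring

/-- Positivity of the Plotkin-style test. -/
lemma plotkin_nonneg (hp0 : ∀ x, 0 ≤ p x) :
    0 ≤ ∑ S : Finset (Fin n), (A p S)^2 * ((n:ℝ) - 2 * S.card) := by
  rw [sum_sq_mul]
  refine Finset.sum_nonneg fun x _ => Finset.sum_nonneg fun y _ => ?_
  refine mul_nonneg (mul_nonneg (hp0 x) (hp0 y)) ?_
  have hw : ∀ S : Finset (Fin n), (∏ i ∈ S, eta x y i) * ((n:ℝ) - 2 * S.card)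
      = ∑ i₀ : Fin n, (∏ i ∈ S, eta x y i) * (if i₀ ∈ S then (-1:ℝ) else 1) := by
    intro S
    rw [weight_eq, Finset.mul_sum]
  rw [Finset.sum_congr rfl fun S _ => hw S, Finset.sum_comm]
  refine Finset.sum_nonneg fun i₀ _ => ?_
  rw [sum_prod_sign_eq]
  refine mul_nonneg (by linarith [eta_le_one x y i₀]) ?_
  exact Finset.prod_nonneg fun i _ => by linarith [neg_one_le_eta x y i]

/-- The collision probability bound. -/
lemma collision_bound (hn : 0 < n) (heven : Even n)
    (hp0 : ∀ x, 0 ≤ p x) (hp1 : ∑ x, p x = 1)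
    (hindep : KWiseIndep n (n / 2) p) :
    ∑ x, (p x)^2 ≤ ((n:ℝ) + 1) / 2^n := by
  obtain ⟨m, hm⟩ := heven
  have hn2 : n / 2 = m := by omega
  have hA0 : A p ∅ = 1 := by
    simp [A, chi, hp1]
  -- split sums into small and big sets
  have hvan : ∀ S : Finset (Fin n), S ≠ ∅ → S.card ≤ n / 2 → A p S = 0 := fun S hne hcard =>
    fourier_vanish hindep S (Finset.nonempty_iff_ne_empty.mpr hne) hcard
  have hsmall : ∀ w : Finset (Fin n) → ℝ,
      ∑ S ∈ Finset.univ.filter (fun S : Finset (Fin n) => S.card ≤ n / 2), (A p S)^2 * w S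
        = w ∅ := by
    intro w
    rw [Finset.sum_eq_single_of_mem ∅ (by simp) (fun S hS hne => by
      rw [hvan S hne (Finset.mem_filter.mp hS).2]; ring)]
    rw [hA0]; ring
  have hsplit : ∀ w : Finset (Fin n) → ℝ,
      ∑ S : Finset (Fin n), (A p S)^2 * w S
        = w ∅ + ∑ S ∈ Finset.univ.filter
            (fun S : Finset (Fin n) => ¬ S.card ≤ n / 2), (A p S)^2 * w S := by
    intro w
    rw [← Finset.sum_filter_add_sum_filter_not Finset.univ
      (fun S : Finset (Fin n) => S.card ≤ n / 2) (fun S => (A p S)^2 * w S), hsmall w]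
  set B := ∑ S ∈ Finset.univ.filter
      (fun S : Finset (Fin n) => ¬ S.card ≤ n / 2), (A p S)^2 with hB
  have hBnonneg : 0 ≤ B := Finset.sum_nonneg fun S _ => sq_nonneg _
  -- Plotkin test gives B ≤ n/2
  have hplot := plotkin_nonneg p hp0
  rw [hsplit (fun S => (n:ℝ) - 2 * S.card)] at hplot
  have hbig : ∑ S ∈ Finset.univ.filter
        (fun S : Finset (Fin n) => ¬ S.card ≤ n / 2),
        (A p S)^2 * ((n:ℝ) - 2 * S.card)
      ≤ ∑ S ∈ Finset.univ.filter
        (fun S : Finset (Fin n) => ¬ S.card ≤ n / 2), (A p S)^2 * (-2) := by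
    refine Finset.sum_le_sum fun S hS => ?_
    have hcard : m + 1 ≤ S.card := by
      have := (Finset.mem_filter.mp hS).2
      omega
    have hcardR : (m:ℝ) + 1 ≤ (S.card : ℝ) := by exact_mod_cast hcard
    have hnR : (n:ℝ) = m + m := by exact_mod_cast hm
    have : (n:ℝ) - 2 * S.card ≤ -2 := by linarith
    nlinarith [sq_nonneg (A p S)]
  have hB2 : B ≤ (n:ℝ) / 2 := by
    have : ∑ S ∈ Finset.univ.filter
        (fun S : Finset (Fin n) => ¬ S.card ≤ n / 2), (A p S)^2 * (-2) = -2 * B := by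
      rw [hB, Finset.mul_sum]
      exact Finset.sum_congr rfl fun S _ => by ring
    rw [this] at hbig
    simp only [Finset.card_empty, Nat.cast_zero, mul_zero, sub_zero] at hplot
    linarith
  -- Parseval gives the bound
  have hpars := parseval p
  have h1 : ∑ S : Finset (Fin n), (A p S)^2 = 1 + B := by
    have := hsplit (fun _ => (1:ℝ))
    simp only [mul_one] at this
    rw [this, hB]
  rw [h1] at hpars
  have h2pow : (0:ℝ) < 2^n := by positivity
  have hn1 : (1:ℝ) ≤ (n:ℝ) := by exact_mod_cast hn
  have hfinal : (2:ℝ)^n * ∑ x, (p x)^2 ≤ (n:ℝ) + 1 := by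
    rw [← hpars]
    linarith
  rw [le_div_iff₀ h2pow, mul_comm]
  exact hfinal

end KWIaux

/-- If `X` is an `(n/2)`-wise independent random variable on `{0,1}^n` (`n` positive and
even), then `H(X) ≥ n − log₂(n+1)`. -/
theorem entropy_of_half_wise_indep (n : ℕ) (hn : 0 < n) (heven : Even n)
    (p : (Fin n → Bool) → ℝ) (hp0 : ∀ x, 0 ≤ p x) (hp1 : ∑ x, p x = 1)
    (hindep : KWiseIndep n (n / 2) p) :
    shannonEntropy p ≥ (n : ℝ) - Real.logb 2 ((n : ℝ) + 1) := by
  have hcol := KWIaux.collision_bound p hn heven hp0 hp1 hindep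
  -- positivity of the collision probability
  have hex : ∃ x, 0 < p x := by
    by_contra hc
    push_neg at hc
    have hz : ∀ x, p x = 0 := fun x => le_antisymm (hc x) (hp0 x)
    simp [hz] at hp1
  obtain ⟨x₀, hx₀⟩ := hex
  have hpos : 0 < ∑ x, (p x)^2 :=
    lt_of_lt_of_le (by positivity)
      (Finset.single_le_sum (fun x _ => sq_nonneg (p x)) (Finset.mem_univ x₀))
  -- Jensen: ∑ p log p ≤ log ∑ p²
  set t := Finset.univ.filter (fun x : Fin n → Bool => 0 < p x) with ht
  have hmem_t : ∀ x (_ : x ∈ t), p x ∈ Set.Ioi (0:ℝ) := fun x hx =>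
    (Finset.mem_filter.mp hx).2
  have hsum_t : ∑ x ∈ t, p x = 1 := by
    rw [ht, Finset.sum_filter_of_ne, hp1]
    intro x _ hne
    exact lt_of_le_of_ne (hp0 x) (Ne.symm hne)
  have hjensen := (strictConcaveOn_log_Ioi.concaveOn).le_map_sum
    (t := t) (w := p) (p := p) (fun x hx => le_of_lt (hmem_t x hx)) hsum_t hmem_t
  simp only [smul_eq_mul] at hjensen
  have hsq_t : ∑ x ∈ t, p x * p x = ∑ x, (p x)^2 := by
    rw [ht, Finset.sum_filter_of_ne]
    · exact Finset.sum_congr rfl fun x _ => (sq (p x)).symm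
    · intro x _ hne
      rcases lt_or_eq_of_le (hp0 x) with h | h
      · exact h
      · exact absurd (by rw [← h]; ring) hne
  have hlog_t : ∑ x, p x * Real.log (p x) = ∑ x ∈ t, p x * Real.log (p x) := by
    rw [ht, Finset.sum_filter_of_ne]
    intro x _ hne
    rcases lt_or_eq_of_le (hp0 x) with h | h
    · exact h
    · exact absurd (by rw [← h]; ring) hne
  rw [hsq_t] at hjensen
  have hkey : ∑ x, p x * Real.log (p x) ≤ Real.log (((n:ℝ) + 1) / 2^n) := by
    rw [hlog_t]
    exact le_trans hjensen (Real.log_le_log hpos hcol)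
  have hlog2 : (0:ℝ) < Real.log 2 := Real.log_pos (by norm_num)
  have hHsum : ∑ x, p x * Real.logb 2 (p x)
      = (∑ x, p x * Real.log (p x)) / Real.log 2 := by
    rw [Finset.sum_div]
    refine Finset.sum_congr rfl fun x _ => ?_
    rw [Real.logb]
    ring
  have hfin : ∑ x, p x * Real.logb 2 (p x) ≤ Real.logb 2 (((n:ℝ) + 1) / 2^n) := by
    rw [hHsum, Real.logb]
    exact div_le_div_of_nonneg_right hkey hlog2.le
  have hval : Real.logb 2 (((n:ℝ) + 1) / 2^n) = Real.logb 2 ((n:ℝ) + 1) - n := by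
    rw [Real.logb_div (by positivity) (by positivity), Real.logb_pow,
      Real.logb_self_eq_one (by norm_num)]
    ring
  rw [hval] at hfin
  unfold shannonEntropy
  linarith
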